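/- Let 0 < r ≤ R be real numbers, let P be a finite set of points in the Euclidean plane ℝ², and let G be a simple graph with vertex set P such that any two distinct points at Euclidean distance less than r are adjacent and any two points at Euclidean distance greater than R are non-adjacent. Let v ∈ P, let d ≥ 1 be a natural number, and let S ⊆ P be an independent set of G all of whose elements are at graph distance at most d from v in G. Then |S| ≤ (2dR/r + 1)². -/

import Mathlib

open Finset

lemma walk_dist_le {P : Finset (EuclideanSpace ℝ (Fin 2))} {G : SimpleGraph {x // x ∈ P}}
    {R : ℝ}
    (hGfar : ∀ u w : {x // x ∈ P},
      R < dist (u : EuclideanSpace ℝ (Fin 2)) (w : EuclideanSpace ℝ (Fin 2)) → ¬ G.Adj u w)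
    {a b : {x // x ∈ P}} (p : G.Walk a b) :
    dist (a : EuclideanSpace ℝ (Fin 2)) (b : EuclideanSpace ℝ (Fin 2)) ≤ p.length * R := by
  induction p with
  | nil => simp
  | cons h p ih =>
    rename_i u w c
    have h1 : dist (u : EuclideanSpace ℝ (Fin 2)) (w : EuclideanSpace ℝ (Fin 2)) ≤ R := by
      by_contra hc
      exact hGfar u w (lt_of_not_ge hc) h
    calc dist (u : EuclideanSpace ℝ (Fin 2)) (c : EuclideanSpace ℝ (Fin 2))
        ≤ dist (u : EuclideanSpace ℝ (Fin 2)) (w : EuclideanSpace ℝ (Fin 2)) +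
          dist (w : EuclideanSpace ℝ (Fin 2)) (c : EuclideanSpace ℝ (Fin 2)) := dist_triangle _ _ _
      _ ≤ R + p.length * R := add_le_add h1 ih
      _ = (p.cons h).length * R := by
          simp [SimpleGraph.Walk.length_cons]; ring

/-- Growth-boundedness of quasi unit disk graphs with parameters `r ≤ R`: any
independent set whose elements are within graph distance `d ≥ 1` of a vertex
`v` has size at most `(2dR/r + 1)²`. -/
theorem stmt_11 (r R : ℝ) (hr : 0 < r) (hrR : r ≤ R)
    (P : Finset (EuclideanSpace ℝ (Fin 2)))
    (G : SimpleGraph {x // x ∈ P})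
    (hGnear : ∀ u w : {x // x ∈ P}, u ≠ w →
      dist (u : EuclideanSpace ℝ (Fin 2)) (w : EuclideanSpace ℝ (Fin 2)) < r → G.Adj u w)
    (hGfar : ∀ u w : {x // x ∈ P},
      R < dist (u : EuclideanSpace ℝ (Fin 2)) (w : EuclideanSpace ℝ (Fin 2)) → ¬ G.Adj u w)
    (v : {x // x ∈ P}) (d : ℕ) (hd : 1 ≤ d) (S : Finset {x // x ∈ P})
    (hSind : ∀ u ∈ S, ∀ w ∈ S, u ≠ w → ¬ G.Adj u w)
    (hSd : ∀ u ∈ S, G.Reachable v u ∧ G.dist v u ≤ d) :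
    (S.card : ℝ) ≤ (2 * d * R / r + 1) ^ 2 := by
  classical
  have hR : 0 < R := lt_of_lt_of_le hr hrR
  have hdR : 0 < (d : ℝ) * R := by positivity
  -- every point of S is within Euclidean distance d*R of v
  have hnear : ∀ u ∈ S, dist (u : EuclideanSpace ℝ (Fin 2)) (v : EuclideanSpace ℝ (Fin 2)) ≤ d * R := by
    intro u hu
    obtain ⟨hreach, hdist⟩ := hSd u hu
    obtain ⟨p, hp⟩ := hreach.exists_walk_length_eq_dist
    have := walk_dist_le hGfar p
    rw [hp] at this
    rw [dist_comm]
    calc dist (v : EuclideanSpace ℝ (Fin 2)) (u : EuclideanSpace ℝ (Fin 2)) ≤ (G.dist v u : ℝ) * R := this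
      _ ≤ d * R := by
          apply mul_le_mul_of_nonneg_right _ hR.le
          exact_mod_cast hdist
  -- pairwise separation
  have hsep : ∀ u ∈ S, ∀ w ∈ S, u ≠ w → r ≤ dist (u : EuclideanSpace ℝ (Fin 2)) (w : EuclideanSpace ℝ (Fin 2)) := by
    intro u hu w hw hne
    by_contra h
    exact hSind u hu w hw hne (hGnear u w hne (lt_of_not_ge h))
  -- balls of radius r/2 around points of S are pairwise disjoint
  have hdisj : (S : Set {x // x ∈ P}).PairwiseDisjoint
      (fun u => Metric.ball (u : EuclideanSpace ℝ (Fin 2)) (r / 2)) := by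
    intro u hu w hw hne
    apply Metric.ball_disjoint_ball
    have := hsep u hu w hw hne
    linarith
  have hinj : Set.InjOn (fun u : {x // x ∈ P} => (u : EuclideanSpace ℝ (Fin 2))) (S : Set _) :=
    fun a _ b _ h => Subtype.ext h
  -- measure of the union
  have hunion : ∑ u ∈ S, MeasureTheory.volume (Metric.ball (u : EuclideanSpace ℝ (Fin 2)) (r / 2)) =
      MeasureTheory.volume (⋃ u ∈ S, Metric.ball (u : EuclideanSpace ℝ (Fin 2)) (r / 2)) := by
    rw [MeasureTheory.measure_biUnion_finset hdisj (fun u _ => measurableSet_ball)]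
  have hsubset : (⋃ u ∈ S, Metric.ball (u : EuclideanSpace ℝ (Fin 2)) (r / 2)) ⊆
      Metric.ball (v : EuclideanSpace ℝ (Fin 2)) (d * R + r / 2) := by
    intro x hx
    simp only [Set.mem_iUnion] at hx
    obtain ⟨u, hu, hxu⟩ := hx
    rw [Metric.mem_ball] at hxu ⊢
    calc dist x (v : EuclideanSpace ℝ (Fin 2)) ≤ dist x (u : EuclideanSpace ℝ (Fin 2)) + dist (u : EuclideanSpace ℝ (Fin 2)) (v : EuclideanSpace ℝ (Fin 2)) := dist_triangle _ _ _
      _ < r / 2 + d * R := add_lt_add_of_lt_of_le hxu (hnear u hu)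
      _ = d * R + r / 2 := by ring
  have hle : ∑ u ∈ S, MeasureTheory.volume (Metric.ball (u : EuclideanSpace ℝ (Fin 2)) (r / 2)) ≤
      MeasureTheory.volume (Metric.ball (v : EuclideanSpace ℝ (Fin 2)) (d * R + r / 2)) := by
    rw [hunion]
    exact MeasureTheory.measure_mono hsubset
  -- compute volumes
  set c : ENNReal := ENNReal.ofReal (Real.sqrt Real.pi ^ (2 : ℕ) /
    Real.Gamma (1 + 1)) with hc
  have hvol : ∀ x : EuclideanSpace ℝ (Fin 2), ∀ ρ : ℝ, MeasureTheory.volume (Metric.ball x ρ) =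
      (ENNReal.ofReal ρ) ^ 2 * c := by
    intro x ρ
    have := EuclideanSpace.volume_ball (Fin 2) x ρ
    simpa using this
  simp only [hvol, Finset.sum_const] at hle
  have hc0 : c ≠ 0 := by
    rw [hc]
    simp only [ne_eq, ENNReal.ofReal_eq_zero, not_le]
    have h2 : Real.Gamma (1 + 1) = 1 := by
      norm_num [Real.Gamma_two]
    rw [h2]
    have := Real.sqrt_pos.mpr Real.pi_pos
    positivity
  have hctop : c ≠ ⊤ := ENNReal.ofReal_ne_top
  rw [nsmul_eq_mul, ← mul_assoc] at hle
  have hle2 : (S.card : ENNReal) * (ENNReal.ofReal (r / 2)) ^ 2 ≤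
      (ENNReal.ofReal (d * R + r / 2)) ^ 2 :=
    (ENNReal.mul_le_mul_iff_left hc0 hctop).mp hle
  -- convert to reals
  have hr2 : (0:ℝ) ≤ r / 2 := by linarith
  have hρ : (0:ℝ) ≤ d * R + r / 2 := by linarith
  have hle3 : (S.card : ℝ) * (r / 2) ^ 2 ≤ (d * R + r / 2) ^ 2 := by
    have := hle2
    rw [← ENNReal.ofReal_pow hr2, ← ENNReal.ofReal_pow hρ,
      ← ENNReal.ofReal_natCast S.card, ← ENNReal.ofReal_mul (by positivity)] at this
    exact (ENNReal.ofReal_le_ofReal_iff (by positivity)).mp this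
  -- final algebra
  have key : (2 * d * R / r + 1) ^ 2 * (r / 2) ^ 2 = (d * R + r / 2) ^ 2 := by
    field_simp
  have hr2pos : (0:ℝ) < (r / 2) ^ 2 := by positivity
  nlinarith [hle3, key, hr2pos]
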